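/- (Conjecture 1.1 for S₄, ρ = −1) The Knizhnik–Zamolodchikov system for S₄ with parameter ρ = −1 has a rational fundamental matrix solution: there exists a 4×4 matrix-valued function W whose entries are rational functions of z (quotients of complex polynomials), such that W'(z) = −A(z)·W(z) for all z ∈ ℂ ∖ {z₁, z₂, z₃}, and det W(z) ≠ 0 for some z ∈ ℂ ∖ {z₁, z₂, z₃}. -/

import Mathlib

noncomputable section
open Matrix Polynomial

/-- The 4×4 permutation matrix (over ℂ) of the transposition exchanging coordinates `i` and `j`. -/
def permMat (i j : Fin 4) : Matrix (Fin 4) (Fin 4) ℂ :=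
  Matrix.of fun k l => if l = Equiv.swap i j k then 1 else 0

/-- `P₁ = P(1,2)`. -/
def P1 : Matrix (Fin 4) (Fin 4) ℂ := permMat 0 1
/-- `P₂ = P(1,3)`. -/
def P2 : Matrix (Fin 4) (Fin 4) ℂ := permMat 0 2
/-- `P₃ = P(1,4)`. -/
def P3 : Matrix (Fin 4) (Fin 4) ℂ := permMat 0 3

/-- `A(z) = Σ_{k=1}^{3} P_k/(z − z_k)`. -/
def Amat (z₁ z₂ z₃ z : ℂ) : Matrix (Fin 4) (Fin 4) ℂ :=
  (z - z₁)⁻¹ • P1 + (z - z₂)⁻¹ • P2 + (z - z₃)⁻¹ • P3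

/-- The common denominator polynomial `(X - z₁)(X - z₂)(X - z₃)`. -/
def KZden (z₁ z₂ z₃ : ℂ) : Polynomial ℂ := (X - C z₁) * (X - C z₂) * (X - C z₃)

/-- Numerator polynomials of an explicit rational fundamental matrix solution. -/
def KZnum (z₁ z₂ z₃ : ℂ) : Fin 4 → Fin 4 → Polynomial ℂ :=
![![1, 0, 0,
    C (-3) * X^4 + C (4*(z₁+z₂+z₃)) * X^3 + C (-6*(z₁*z₂+z₁*z₃+z₂*z₃)) * X^2
      + C (12*(z₁*z₂*z₃)) * X],
  ![1, C (-1) * (X - C z₁), C (-1) * (X - C z₁),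
    X^4 + C (-2*(z₂+z₃)) * X^3 + C (6*(z₂*z₃)) * X^2 + C (-4*(z₁*z₂*z₃)) * (X - C z₁)],
  ![1, X - C z₂, 0,
    X^4 + C (-2*(z₁+z₃)) * X^3 + C (6*(z₁*z₃)) * X^2 + C (-4*(z₁*z₂*z₃)) * (X - C z₂)],
  ![1, 0, X - C z₃,
    X^4 + C (-2*(z₁+z₂)) * X^3 + C (6*(z₁*z₂)) * X^2 + C (-4*(z₁*z₂*z₃)) * (X - C z₃)]]

set_option maxHeartbeats 1000000 in
lemma Amat_eq (z₁ z₂ z₃ z : ℂ) : Amat z₁ z₂ z₃ z =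
    !![0, (z-z₁)⁻¹, (z-z₂)⁻¹, (z-z₃)⁻¹;
       (z-z₁)⁻¹, (z-z₂)⁻¹+(z-z₃)⁻¹, 0, 0;
       (z-z₂)⁻¹, 0, (z-z₁)⁻¹+(z-z₃)⁻¹, 0;
       (z-z₃)⁻¹, 0, 0, (z-z₁)⁻¹+(z-z₂)⁻¹] := by
  ext i j
  fin_cases i <;> fin_cases j <;>
    simp [Amat, P1, P2, P3, permMat, Equiv.swap_apply_def, Matrix.vecHead, Matrix.vecTail]

set_option maxHeartbeats 2000000 in
lemma KZderiv_eq (z₁ z₂ z₃ z : ℂ)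
    (h1 : z - z₁ ≠ 0) (h2 : z - z₂ ≠ 0) (h3 : z - z₃ ≠ 0) (i j : Fin 4) :
    (-(Amat z₁ z₂ z₃ z * Matrix.of (fun k l =>
        (KZnum z₁ z₂ z₃ k l).eval z / (KZden z₁ z₂ z₃).eval z))) i j
      = (((KZnum z₁ z₂ z₃ i j).derivative.eval z * (KZden z₁ z₂ z₃).eval z
          - (KZnum z₁ z₂ z₃ i j).eval z * (KZden z₁ z₂ z₃).derivative.eval z)
          / ((KZden z₁ z₂ z₃).eval z)^2) := by
  have T1 : ∀ n : ℂ, (z - z₁)⁻¹ * (n / ((z-z₁)*(z-z₂)*(z-z₃)))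
      = n * ((z-z₂)*(z-z₃)) / ((z-z₁)*(z-z₂)*(z-z₃))^2 := fun n => by
    rw [eq_div_iff (pow_ne_zero 2 (mul_ne_zero (mul_ne_zero h1 h2) h3))]
    field_simp
  have T2 : ∀ n : ℂ, (z - z₂)⁻¹ * (n / ((z-z₁)*(z-z₂)*(z-z₃)))
      = n * ((z-z₁)*(z-z₃)) / ((z-z₁)*(z-z₂)*(z-z₃))^2 := fun n => by
    rw [eq_div_iff (pow_ne_zero 2 (mul_ne_zero (mul_ne_zero h1 h2) h3))]
    field_simp
  have T3 : ∀ n : ℂ, (z - z₃)⁻¹ * (n / ((z-z₁)*(z-z₂)*(z-z₃)))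
      = n * ((z-z₁)*(z-z₂)) / ((z-z₁)*(z-z₂)*(z-z₃))^2 := fun n => by
    rw [eq_div_iff (pow_ne_zero 2 (mul_ne_zero (mul_ne_zero h1 h2) h3))]
    field_simp
  rw [Amat_eq]
  fin_cases i <;> fin_cases j <;>
    simp only [Fin.zero_eta, Fin.mk_one, Fin.reduceFinMk, Fin.isValue, KZnum, KZden,
        Matrix.neg_apply, Matrix.mul_apply, Fin.sum_univ_four, Matrix.of_apply,
        Matrix.cons_val', Matrix.cons_val_zero, Matrix.cons_val_one,
        Matrix.cons_val_two, Matrix.cons_val_three, Matrix.cons_val_succ,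
        Matrix.vecHead, Matrix.vecTail, Matrix.empty_val',
        Matrix.cons_val_fin_one, Function.comp, derivative_add, derivative_mul,
        derivative_sub, derivative_pow, derivative_X, derivative_C, derivative_one,
        derivative_zero, eval_add, eval_mul, eval_sub, eval_pow, eval_X, eval_C,
        eval_one, eval_zero, add_mul, zero_mul, mul_zero, zero_add, add_zero,
        zero_div, one_mul, mul_one, neg_zero, zero_sub, sub_zero,
        T1, T2, T3, ← add_div, ← neg_div] <;>
    first
      | rfl
      | (congr 1; ring)

set_option maxHeartbeats 1000000 in
theorem my_det_fin_four {R : Type*} [CommRing R] (A : Matrix (Fin 4) (Fin 4) R) :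
    A.det = A 0 0 * A 1 1 * A 2 2 * A 3 3 - A 0 0 * A 1 1 * A 2 3 * A 3 2 - A 0 0 * A 1 2 * A 2 1 * A 3 3 + A 0 0 * A 1 2 * A 2 3 * A 3 1 + A 0 0 * A 1 3 * A 2 1 * A 3 2 - A 0 0 * A 1 3 * A 2 2 * A 3 1 - A 0 1 * A 1 0 * A 2 2 * A 3 3 + A 0 1 * A 1 0 * A 2 3 * A 3 2 + A 0 1 * A 1 2 * A 2 0 * A 3 3 - A 0 1 * A 1 2 * A 2 3 * A 3 0 - A 0 1 * A 1 3 * A 2 0 * A 3 2 + A 0 1 * A 1 3 * A 2 2 * A 3 0 + A 0 2 * A 1 0 * A 2 1 * A 3 3 - A 0 2 * A 1 0 * A 2 3 * A 3 1 - A 0 2 * A 1 1 * A 2 0 * A 3 3 + A 0 2 * A 1 1 * A 2 3 * A 3 0 + A 0 2 * A 1 3 * A 2 0 * A 3 1 - A 0 2 * A 1 3 * A 2 1 * A 3 0 - A 0 3 * A 1 0 * A 2 1 * A 3 2 + A 0 3 * A 1 0 * A 2 2 * A 3 1 + A 0 3 * A 1 1 * A 2 0 * A 3 2 - A 0 3 *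 A 1 1 * A 2 2 * A 3 0 - A 0 3 * A 1 2 * A 2 0 * A 3 1 + A 0 3 * A 1 2 * A 2 1 * A 3 0 := by
  rw [Matrix.det_succ_row_zero]
  simp only [Fin.sum_univ_succ, Fin.sum_univ_zero, det_fin_three, submatrix_apply,
    submatrix_submatrix, Function.comp_apply, Fin.succ_zero_eq_one, Fin.succ_one_eq_two,
    Fin.zero_succAbove, Fin.succ_succAbove_zero, Fin.succ_succAbove_one,
    Fin.val_zero, Fin.val_succ, Fin.val_one, pow_zero, pow_succ, pow_one,
    one_mul, neg_mul, neg_neg, mul_one, Finset.sum_singleton, Finset.univ_unique,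
    Fin.default_eq_zero, add_zero]
  norm_num [Fin.succ, Fin.succAbove, Fin.castSucc, Fin.castAdd, Fin.castLE, Fin.lt_def]
  simp only [Fin.reduceFinMk, Fin.isValue]
  ring

set_option maxHeartbeats 2000000 in
lemma KZdetnum_eq (z₁ z₂ z₃ z : ℂ) :
    (Matrix.of (fun k l => (KZnum z₁ z₂ z₃ k l).eval z)).det
      = 12 * (((z-z₁)*(z-z₂)*(z-z₃))^2) := by
  rw [my_det_fin_four]
  simp only [Fin.zero_eta, Fin.mk_one, Fin.reduceFinMk, Fin.isValue, KZnum,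
    Matrix.of_apply, Matrix.cons_val', Matrix.cons_val_zero, Matrix.cons_val_one,
    Matrix.cons_val_two, Matrix.cons_val_three, Matrix.cons_val_succ,
    Matrix.vecHead, Matrix.vecTail, Matrix.empty_val', Matrix.cons_val_fin_one,
    Function.comp, eval_add, eval_mul, eval_sub, eval_pow, eval_X, eval_C,
    eval_one, eval_zero]
  ring

set_option maxHeartbeats 1000000 in
lemma KZdet_eq (z₁ z₂ z₃ z : ℂ)
    (h1 : z - z₁ ≠ 0) (h2 : z - z₂ ≠ 0) (h3 : z - z₃ ≠ 0) :
    (Matrix.of (fun k l => (KZnum z₁ z₂ z₃ k l).eval z / (KZden z₁ z₂ z₃).eval z)).det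
      = 12 / (((z-z₁)*(z-z₂)*(z-z₃))^2) := by
  have hden : (KZden z₁ z₂ z₃).eval z = (z-z₁)*(z-z₂)*(z-z₃) := by
    simp [KZden]
  have hM : (Matrix.of (fun k l => (KZnum z₁ z₂ z₃ k l).eval z / (KZden z₁ z₂ z₃).eval z))
      = (((z-z₁)*(z-z₂)*(z-z₃))⁻¹) • (Matrix.of (fun k l => (KZnum z₁ z₂ z₃ k l).eval z)) := by
    ext k l
    simp [hden, div_eq_inv_mul]
  rw [hM, Matrix.det_smul, KZdetnum_eq, Fintype.card_fin]
  have hD : (z-z₁)*(z-z₂)*(z-z₃) ≠ 0 := mul_ne_zero (mul_ne_zero h1 h2) h3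
  field_simp

/-- Conjecture 1.1, case `S₄`, `ρ = −1`: the KZ system has a rational
fundamental matrix solution. -/
theorem stmt_6 (z₁ z₂ z₃ : ℂ) (h12 : z₁ ≠ z₂) (h13 : z₁ ≠ z₃) (h23 : z₂ ≠ z₃) :
    ∃ W : ℂ → Fin 4 → Fin 4 → ℂ,
      (∀ i j : Fin 4, ∃ p q : Polynomial ℂ, q ≠ 0 ∧
        ∀ z : ℂ, z ≠ z₁ → z ≠ z₂ → z ≠ z₃ →
          q.eval z ≠ 0 ∧ W z i j = p.eval z / q.eval z) ∧
      (∀ z : ℂ, z ≠ z₁ → z ≠ z₂ → z ≠ z₃ →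
        HasDerivAt (fun w => W w)
          (fun i j => (-(Amat z₁ z₂ z₃ z * Matrix.of (W z))) i j) z) ∧
      ∃ z : ℂ, z ≠ z₁ ∧ z ≠ z₂ ∧ z ≠ z₃ ∧ (Matrix.of (W z)).det ≠ 0 := by
  have hq0 : KZden z₁ z₂ z₃ ≠ 0 :=
    (((monic_X_sub_C z₁).mul (monic_X_sub_C z₂)).mul (monic_X_sub_C z₃)).ne_zero
  have hqev : ∀ z : ℂ, z ≠ z₁ → z ≠ z₂ → z ≠ z₃ → (KZden z₁ z₂ z₃).eval z ≠ 0 := by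
    intro z hz1 hz2 hz3
    simp only [KZden, eval_mul, eval_sub, eval_X, eval_C]
    exact mul_ne_zero (mul_ne_zero (sub_ne_zero_of_ne hz1) (sub_ne_zero_of_ne hz2))
      (sub_ne_zero_of_ne hz3)
  refine ⟨fun z i j => (KZnum z₁ z₂ z₃ i j).eval z / (KZden z₁ z₂ z₃).eval z, ?_, ?_, ?_⟩
  · intro i j
    exact ⟨KZnum z₁ z₂ z₃ i j, KZden z₁ z₂ z₃, hq0,
      fun z hz1 hz2 hz3 => ⟨hqev z hz1 hz2 hz3, rfl⟩⟩
  · intro z hz1 hz2 hz3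
    have hD := hqev z hz1 hz2 hz3
    refine hasDerivAt_pi.mpr fun i => hasDerivAt_pi.mpr fun j => ?_
    have h := ((KZnum z₁ z₂ z₃ i j).hasDerivAt z).div ((KZden z₁ z₂ z₃).hasDerivAt z) hD
    exact h.congr_deriv (KZderiv_eq z₁ z₂ z₃ z (sub_ne_zero_of_ne hz1)
      (sub_ne_zero_of_ne hz2) (sub_ne_zero_of_ne hz3) i j).symm
  · have hfin : ({z₁, z₂, z₃} : Set ℂ).Finite := Set.toFinite _
    obtain ⟨z, hz⟩ := hfin.infinite_compl.nonempty
    simp only [Set.mem_compl_iff, Set.mem_insert_iff, Set.mem_singleton_iff, not_or] at hz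
    obtain ⟨hz1, hz2, hz3⟩ := hz
    have h1 : z - z₁ ≠ 0 := sub_ne_zero_of_ne hz1
    have h2 : z - z₂ ≠ 0 := sub_ne_zero_of_ne hz2
    have h3 : z - z₃ ≠ 0 := sub_ne_zero_of_ne hz3
    refine ⟨z, hz1, hz2, hz3, ?_⟩
    rw [KZdet_eq z₁ z₂ z₃ z h1 h2 h3]
    exact div_ne_zero (by norm_num) (pow_ne_zero _ (mul_ne_zero (mul_ne_zero h1 h2) h3))
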